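/- Let P be an n×n stochastic matrix and let x ∈ ℝ^n satisfy P^k x = x for some k ≥ 1. Then P^{c(P)} x = x, where c(P) is the cyclicity of the final graph of P; that is, the length of any periodic orbit of the map x ↦ Px divides c(P). -/

import Mathlib

open Matrix Filter

/-- `f` is additively homogeneous: `f (c·1 + x) = c·1 + f x`. -/
def AddHomog {n : ℕ} (f : (Fin n → ℝ) → (Fin n → ℝ)) : Prop :=
  ∀ (c : ℝ) (x : Fin n → ℝ), f (fun i => c + x i) = fun i => c + f x i

/-- A map between coordinate spaces is convex if each coordinate function is convex. -/
def IsConvexMap {n m : ℕ} (f : (Fin n → ℝ) → (Fin m → ℝ)) : Prop :=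
  ∀ i, ConvexOn ℝ Set.univ (fun x => f x i)

/-- Subdifferential of a convex map `f : ℝ^n → ℝ^m` at `v`: matrices `P` with
`f x - f v ≥ P (x - v)` componentwise. -/
def Subdiff {n m : ℕ} (f : (Fin n → ℝ) → (Fin m → ℝ)) (v : Fin n → ℝ) :
    Set (Matrix (Fin m) (Fin n) ℝ) :=
  {P | ∀ x i, P.mulVec (x - v) i ≤ f x i - f v i}

/-- `p` is a stochastic vector. -/
def IsStochVec {n : ℕ} (p : Fin n → ℝ) : Prop := (∀ i, 0 ≤ p i) ∧ ∑ i, p i = 1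

/-- `P` is a row-stochastic matrix. -/
def IsStochMat {n : ℕ} (P : Matrix (Fin n) (Fin n) ℝ) : Prop := ∀ i, IsStochVec (P i)

/-- `i` has access to `j` in the graph of the nonnegative matrix `P`
(arcs `i → j` when `P i j ≠ 0`). -/
def MatAccess {n : ℕ} (P : Matrix (Fin n) (Fin n) ℝ) : Fin n → Fin n → Prop :=
  Relation.ReflTransGen (fun i j => P i j ≠ 0)

/-- `C` is a class of `P`: an equivalence class of mutual access. -/
def IsClass {n : ℕ} (P : Matrix (Fin n) (Fin n) ℝ) (C : Set (Fin n)) : Prop :=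
  ∃ i, C = {j | MatAccess P i j ∧ MatAccess P j i}

/-- `C` is a final class of `P`: a class with no access out of itself. -/
def IsFinalClass {n : ℕ} (P : Matrix (Fin n) (Fin n) ℝ) (C : Set (Fin n)) : Prop :=
  IsClass P C ∧ ∀ i ∈ C, ∀ j, MatAccess P i j → j ∈ C

/-- `N^f(P)`: the union of the final classes of `P`. -/
def finalNodes {n : ℕ} (P : Matrix (Fin n) (Fin n) ℝ) : Set (Fin n) :=
  {i | ∃ C, IsFinalClass P C ∧ i ∈ C}

/-- Final graph `G^f(P)`: union of graphs of `P_{FF}` over final classes `F`. -/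
def finalGraph {n : ℕ} (P : Matrix (Fin n) (Fin n) ℝ) : Fin n → Fin n → Prop :=
  fun i j => ∃ C, IsFinalClass P C ∧ i ∈ C ∧ j ∈ C ∧ P i j ≠ 0

/-- `N^f(PP)` for a set of matrices. -/
def finalNodesSet {n : ℕ} (PP : Set (Matrix (Fin n) (Fin n) ℝ)) : Set (Fin n) :=
  {i | ∃ P ∈ PP, i ∈ finalNodes P}

/-- `𝒞^f(PP)`: final classes of matrices in `PP`. -/
def finalClassesSet {n : ℕ} (PP : Set (Matrix (Fin n) (Fin n) ℝ)) : Set (Set (Fin n)) :=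
  {C | ∃ P ∈ PP, IsFinalClass P C}

/-- `𝒢^f(PP)`: union of final graphs of matrices in `PP`. -/
def finalGraphSet {n : ℕ} (PP : Set (Matrix (Fin n) (Fin n) ℝ)) : Fin n → Fin n → Prop :=
  fun i j => ∃ P ∈ PP, finalGraph P i j

/-- Access in a directed graph given as a relation. -/
def GAccess {n : ℕ} (G : Fin n → Fin n → Prop) : Fin n → Fin n → Prop :=
  Relation.ReflTransGen G

/-- `C` is a (nontrivial) class of the graph `G`: an equivalence class of mutual
access containing at least one arc (i.e. the node set of a strongly connected component
of the graph `G`). -/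
def IsGraphClass {n : ℕ} (G : Fin n → Fin n → Prop) (C : Set (Fin n)) : Prop :=
  (∃ i, C = {j | GAccess G i j ∧ GAccess G j i}) ∧ ∃ i ∈ C, ∃ j ∈ C, G i j

/-- `G^k`: arcs are directed paths of length `k` in `G`. -/
def GraphPow {n : ℕ} (G : Fin n → Fin n → Prop) (k : ℕ) : Fin n → Fin n → Prop :=
  fun i j => ∃ c : ℕ → Fin n, c 0 = i ∧ c k = j ∧ ∀ t < k, G (c t) (c (t + 1))

/-- There is a circuit of length `ℓ ≥ 1` of `G` with all nodes in `C`. -/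
def HasCircuitIn {n : ℕ} (G : Fin n → Fin n → Prop) (C : Set (Fin n)) (ℓ : ℕ) : Prop :=
  0 < ℓ ∧ ∃ c : ℕ → Fin n, c 0 = c ℓ ∧ (∀ t ≤ ℓ, c t ∈ C) ∧ ∀ t < ℓ, G (c t) (c (t + 1))

/-- gcd of a set of natural numbers. -/
noncomputable def SetGcd (S : Set ℕ) : ℕ :=
  sInf {d | (∀ s ∈ S, d ∣ s) ∧ ∀ e, (∀ s ∈ S, e ∣ s) → e ∣ d}

/-- lcm of a set of natural numbers. -/
noncomputable def SetLcm (S : Set ℕ) : ℕ :=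
  sInf {m | (∀ s ∈ S, s ∣ m) ∧ ∀ e, (∀ s ∈ S, s ∣ e) → m ∣ e}

/-- Cyclicity of a graph: lcm over the strongly connected components of the
gcd of the lengths of their circuits. -/
noncomputable def GraphCyclicity {n : ℕ} (G : Fin n → Fin n → Prop) : ℕ :=
  SetLcm {d | ∃ C, IsGraphClass G C ∧ d = SetGcd {ℓ | HasCircuitIn G C ℓ}}

/-- The (additive) eigenspace of `f` for eigenvalue `lam`. -/
def Eigenspace {n : ℕ} (f : (Fin n → ℝ) → (Fin n → ℝ)) (lam : ℝ) : Set (Fin n → ℝ) :=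
  {x | f x = fun i => lam + x i}

/-- Restriction of a vector to the coordinates in `C`. -/
def restrictTo {n : ℕ} (C : Set (Fin n)) (x : Fin n → ℝ) : C → ℝ := fun i => x i


section Aux16
set_option maxHeartbeats 1000000

lemma subgroup_diff_rep (S : Set ℕ) (z : ℤ) (hz : z ∈ AddSubgroup.closure ((↑) '' S : Set ℤ)) :
    ∃ u v : ℕ, u ∈ AddSubmonoid.closure S ∧ v ∈ AddSubmonoid.closure S ∧ (u : ℤ) - v = z := by
  induction hz using AddSubgroup.closure_induction with
  | mem x hx =>
    obtain ⟨s, hs, rfl⟩ := hx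
    exact ⟨s, 0, AddSubmonoid.subset_closure hs, (AddSubmonoid.closure S).zero_mem, by simp⟩
  | zero => exact ⟨0, 0, (AddSubmonoid.closure S).zero_mem, (AddSubmonoid.closure S).zero_mem, by simp⟩
  | add x y hx hy ihx ihy =>
    obtain ⟨u1, v1, hu1, hv1, h1⟩ := ihx
    obtain ⟨u2, v2, hu2, hv2, h2⟩ := ihy
    exact ⟨u1 + u2, v1 + v2, (AddSubmonoid.closure S).add_mem hu1 hu2,
      (AddSubmonoid.closure S).add_mem hv1 hv2, by push_cast; linarith⟩
  | neg x hx ihx =>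
    obtain ⟨u, v, hu, hv, h⟩ := ihx
    exact ⟨v, u, hv, hu, by linarith⟩

lemma dvd_of_mem_intClosure (S : Set ℕ) (e : ℕ) (he : ∀ s ∈ S, e ∣ s) (z : ℤ)
    (hz : z ∈ AddSubgroup.closure ((↑) '' S : Set ℤ)) : (e : ℤ) ∣ z := by
  induction hz using AddSubgroup.closure_induction with
  | mem x hx => obtain ⟨s, hs, rfl⟩ := hx; exact_mod_cast he s hs
  | zero => exact dvd_zero _
  | add x y _ _ ihx ihy => exact dvd_add ihx ihy
  | neg x _ ihx => exact ihx.neg_right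

lemma setGcd_spec (S : Set ℕ) :
    (∀ s ∈ S, SetGcd S ∣ s) ∧ (∀ e, (∀ s ∈ S, e ∣ s) → e ∣ SetGcd S) ∧
    ∃ u v : ℕ, u ∈ AddSubmonoid.closure S ∧ v ∈ AddSubmonoid.closure S ∧
      (u : ℤ) - v = SetGcd S := by
  obtain ⟨g, hg⟩ := Int.subgroup_cyclic (AddSubgroup.closure ((↑) '' S : Set ℤ))
  have hdvd : ∀ s ∈ S, g.natAbs ∣ s := by
    intro s hs
    have h1 : (s : ℤ) ∈ AddSubgroup.closure ({g} : Set ℤ) := by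
      rw [← hg]; exact AddSubgroup.subset_closure ⟨s, hs, rfl⟩
    rw [AddSubgroup.mem_closure_singleton] at h1
    obtain ⟨m, hm⟩ := h1
    have h2 : g ∣ (s : ℤ) := ⟨m, by rw [← hm, smul_eq_mul, mul_comm]⟩
    exact Int.ofNat_dvd.mp (Int.natAbs_dvd.mpr h2)
  have hgmem : g ∈ AddSubgroup.closure ((↑) '' S : Set ℤ) := by
    rw [hg]; exact AddSubgroup.subset_closure rfl
  have hcd : ∀ e : ℕ, (∀ s ∈ S, e ∣ s) → e ∣ g.natAbs := by
    intro e he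
    exact Int.ofNat_dvd.mp (Int.dvd_natAbs.mpr (dvd_of_mem_intClosure S e he g hgmem))
  have hmem : ((g.natAbs : ℕ) : ℤ) ∈ AddSubgroup.closure ((↑) '' S : Set ℤ) := by
    rcases Int.natAbs_eq g with h | h
    · rw [← h]; exact hgmem
    · have h3 : ((g.natAbs : ℕ) : ℤ) = -g := by omega
      rw [h3]; exact AddSubgroup.neg_mem _ hgmem
  obtain ⟨u, v, hu, hv, huv⟩ := subgroup_diff_rep S _ hmem
  have hset : {d' | (∀ s ∈ S, d' ∣ s) ∧ ∀ e, (∀ s ∈ S, e ∣ s) → e ∣ d'} = {g.natAbs} := by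
    ext d'
    simp only [Set.mem_setOf_eq, Set.mem_singleton_iff]
    constructor
    · rintro ⟨h1, h2⟩
      exact Nat.dvd_antisymm (hcd d' h1) (h2 g.natAbs hdvd)
    · rintro rfl; exact ⟨hdvd, hcd⟩
  have heq : SetGcd S = g.natAbs := by rw [SetGcd, hset, csInf_singleton]
  rw [heq]
  exact ⟨hdvd, hcd, u, v, hu, hv, huv⟩

lemma setLcm_dvd_mem (S : Set ℕ) (hfin : S.Finite) :
    ∀ s ∈ S, s ∣ SetLcm S := by
  classical
  set L := hfin.toFinset.lcm id with hL
  have h1 : ∀ s ∈ S, s ∣ L := fun s hs => Finset.dvd_lcm (hfin.mem_toFinset.mpr hs)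
  have h2 : ∀ e, (∀ s ∈ S, s ∣ e) → L ∣ e := fun e he =>
    Finset.lcm_dvd (fun b hb => he b (hfin.mem_toFinset.mp hb))
  have hset : {m | (∀ s ∈ S, s ∣ m) ∧ ∀ e, (∀ s ∈ S, s ∣ e) → m ∣ e} = {L} := by
    ext m
    simp only [Set.mem_setOf_eq, Set.mem_singleton_iff]
    constructor
    · rintro ⟨ha, hb⟩
      exact Nat.dvd_antisymm (hb L h1) (h2 m ha)
    · rintro rfl; exact ⟨h1, h2⟩
  have heq : SetLcm S = L := by rw [SetLcm, hset, csInf_singleton]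
  rw [heq]; exact h1

lemma closure_cases (A : Set ℕ) (hadd : ∀ a ∈ A, ∀ b ∈ A, a + b ∈ A) (x : ℕ)
    (hx : x ∈ AddSubmonoid.closure A) : x = 0 ∨ x ∈ A := by
  induction hx using AddSubmonoid.closure_induction with
  | mem x hx => exact Or.inr hx
  | zero => exact Or.inl rfl
  | add x y _ _ ihx ihy =>
    rcases ihx with hx0 | hxA
    · subst hx0; simpa using ihy
    · rcases ihy with hy0 | hyA
      · subst hy0; exact Or.inr (by simpa using hxA)
      · exact Or.inr (hadd x hxA y hyA)

lemma nsmul_mem_of_add (A : Set ℕ) (hadd : ∀ a ∈ A, ∀ b ∈ A, a + b ∈ A)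
    (a : ℕ) (ha : a ∈ A) : ∀ t : ℕ, 1 ≤ t → t * a ∈ A := by
  intro t ht
  induction t with
  | zero => omega
  | succ s ih =>
    rcases Nat.lt_or_ge 1 (s+1) with h | h
    · have h1 := ih (by omega)
      have h2 := hadd _ h1 a ha
      have : (s+1) * a = s * a + a := by ring
      rwa [this]
    · have hs : s = 0 := by omega
      subst hs; simpa using ha

lemma pump_lemma (A : Set ℕ) (hne : A.Nonempty) (hadd : ∀ a ∈ A, ∀ b ∈ A, a + b ∈ A)
    (hpos : ∀ a ∈ A, 0 < a) :
    ∃ m0 : ℕ, 1 ≤ m0 ∧ ∀ m ≥ m0, m * SetGcd A ∈ A := by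
  obtain ⟨hdvd, hcd, u, v, hu, hv, huv⟩ := setGcd_spec A
  set g := SetGcd A with hgdef
  obtain ⟨a0, ha0⟩ := hne
  have hgpos : 0 < g := by
    by_contra h
    have hg0 : g = 0 := by omega
    have := hdvd a0 ha0
    rw [hg0] at this
    have := Nat.eq_zero_of_zero_dvd this
    have := hpos a0 ha0
    omega
  have hu' := closure_cases A hadd u hu
  have hv' := closure_cases A hadd v hv
  rcases hv' with hv0 | hvA
  · -- v = 0, so u = g ∈ A
    subst hv0
    have hug : u = g := by
      have : (u : ℤ) = g := by push_cast at huv ⊢; linarith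
      exact_mod_cast this
    subst hug
    have hgA : g ∈ A := by
      rcases hu' with h | h
      · omega
      · exact h
    exact ⟨1, le_refl 1, fun m hm => nsmul_mem_of_add A hadd g hgA m hm⟩
  · have hgv : g ∣ v := hdvd v hvA
    obtain ⟨w, hw⟩ := hgv
    have hvpos := hpos v hvA
    have hwpos : 0 < w := by
      rcases Nat.eq_zero_or_pos w with h | h
      · exfalso; rw [h, Nat.mul_zero] at hw; omega
      · exact h
    have huA : u ∈ A := by
      rcases hu' with h | h
      · exfalso; subst h
        have h1 : (0:ℤ) - (v:ℤ) = (g:ℤ) := by exact_mod_cast huv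
        have h2 : (0:ℤ) < v := by exact_mod_cast hvpos
        have h3 : (0:ℤ) < g := by exact_mod_cast hgpos
        linarith
      · exact h
    have hueq : u = v + g := by
      have : (u : ℤ) = v + g := by push_cast at huv ⊢; linarith
      exact_mod_cast this
    refine ⟨w * w + 1, by omega, fun m hm => ?_⟩
    have hrw : m % w < w := Nat.mod_lt _ hwpos
    have hmqr : m = m / w * w + m % w := by
      rw [Nat.mul_comm]; exact (Nat.div_add_mod m w).symm
    set q := m / w with hq
    set r := m % w with hr
    have hqw : w ≤ q := by
      have h1 : w * w ≤ m := by omega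
      calc w = (w * w) / w := by rw [Nat.mul_div_cancel_left _ hwpos]
        _ ≤ m / w := Nat.div_le_div_right h1
    have h2 : r ≤ q := by omega
    have key : m * g = (q - r) * v + r * u := by
      obtain ⟨s, hs⟩ := Nat.le.dest h2
      have h3 : q - r = s := by omega
      have hm' : m = (r + s) * w + r := by rw [hs]; exact hmqr
      rw [h3, hueq, hw, hm']
      ring
    rw [key]
    rcases Nat.eq_zero_or_pos r with hr0 | hrpos
    · rw [hr0]
      simp only [Nat.zero_mul, Nat.add_zero, Nat.sub_zero]
      exact nsmul_mem_of_add A hadd v hvA q (by omega)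
    · have h1 : (q - r) * v ∈ A := nsmul_mem_of_add A hadd v hvA (q - r) (by omega)
      have h2 : r * u ∈ A := nsmul_mem_of_add A hadd u huA r hrpos
      exact hadd _ h1 _ h2

section Graph
variable {n : ℕ} {G : Fin n → Fin n → Prop}

lemma graphPow_zero (i : Fin n) : GraphPow G 0 i i :=
  ⟨fun _ => i, rfl, rfl, fun t ht => absurd ht (Nat.not_lt_zero t)⟩

lemma graphPow_single {i j : Fin n} (h : G i j) : GraphPow G 1 i j := by
  refine ⟨fun t => if t = 0 then i else j, by simp, by simp, ?_⟩
  intro t ht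
  interval_cases t
  simpa using h

lemma graphPow_trans {a b : ℕ} {i v j : Fin n} (h1 : GraphPow G a i v)
    (h2 : GraphPow G b v j) : GraphPow G (a + b) i j := by
  obtain ⟨c1, hc10, hc1a, hc1arc⟩ := h1
  obtain ⟨c2, hc20, hc2b, hc2arc⟩ := h2
  refine ⟨fun t => if t ≤ a then c1 t else c2 (t - a), by simp [hc10], ?_, ?_⟩
  · by_cases hb : b = 0
    · subst hb; simp [hc1a, ← hc20, hc2b]
    · have : ¬ (a + b ≤ a) := by omega
      simp only [this, if_false]
      rwa [Nat.add_sub_cancel_left]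
  · intro t ht
    by_cases h1t : t + 1 ≤ a
    · have h0t : t ≤ a := by omega
      simp only [h1t, h0t, if_true]
      exact hc1arc t (by omega)
    · by_cases h0t : t ≤ a
      · have hta : t = a := by omega
        subst hta
        have hbpos : 0 < b := by omega
        simp only [h0t, h1t, if_true, if_false]
        have : c1 t = c2 (t + 1 - t - 1) := by
          rw [hc1a, ← hc20]; congr 1; omega
        rw [hc1a, ← hc20]
        have harc := hc2arc 0 (by omega)
        have : t + 1 - t = 1 := by omega
        rw [this]
        exact harc
      · simp only [h0t, h1t, if_false]
        have h2' := hc2arc (t - a) (by omega)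
        have : t + 1 - a = t - a + 1 := by omega
        rw [this]
        exact h2'

lemma reflTransGen_to_graphPow {i j : Fin n} (h : Relation.ReflTransGen G i j) :
    ∃ N, GraphPow G N i j := by
  induction h with
  | refl => exact ⟨0, graphPow_zero i⟩
  | tail _ harc ih =>
    obtain ⟨N, hN⟩ := ih
    exact ⟨N + 1, graphPow_trans hN (graphPow_single harc)⟩

lemma graphPow_to_reflTransGen {N : ℕ} {i j : Fin n} (h : GraphPow G N i j) :
    Relation.ReflTransGen G i j := by
  induction N generalizing j with
  | zero =>
    obtain ⟨c, hc0, hcN, _⟩ := h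
    rw [← hc0, ← hcN]
  | succ N ih =>
    obtain ⟨c, hc0, hcN, hcarc⟩ := h
    have h1 : GraphPow G N i (c N) := ⟨c, hc0, rfl, fun t ht => hcarc t (by omega)⟩
    have h2 := hcarc N (by omega)
    rw [hcN] at h2
    exact Relation.ReflTransGen.tail (ih h1) h2

end Graph

section Stoch
variable {n : ℕ} {P : Matrix (Fin n) (Fin n) ℝ}

lemma isStochMat_mul {Q : Matrix (Fin n) (Fin n) ℝ} (hP : IsStochMat P) (hQ : IsStochMat Q) :
    IsStochMat (P * Q) := by
  intro i
  constructor
  · intro j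
    rw [Matrix.mul_apply]
    exact Finset.sum_nonneg fun v _ => mul_nonneg ((hP i).1 v) ((hQ v).1 j)
  · rw [show ∑ j, (P * Q) i j = ∑ j, ∑ v, P i v * Q v j from by simp [Matrix.mul_apply]]
    rw [Finset.sum_comm]
    calc ∑ v, ∑ j, P i v * Q v j = ∑ v, P i v * ∑ j, Q v j := by
          congr 1; ext v; rw [← Finset.mul_sum]
      _ = ∑ v, P i v := by simp_rw [fun v => (hQ v).2]; simp
      _ = 1 := (hP i).2

lemma isStochMat_pow (hP : IsStochMat P) (N : ℕ) (hn : 1 ≤ n) : IsStochMat (P ^ N) := by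
  induction N with
  | zero =>
    rw [pow_zero]
    intro i
    constructor
    · intro j
      by_cases h : i = j <;> simp [Matrix.one_apply, h]
    · simp [Matrix.one_apply]
  | succ N ih =>
    rw [pow_succ]
    exact isStochMat_mul ih hP

lemma pow_entry_ne_zero_iff (hP : IsStochMat P) (hn : 1 ≤ n) (N : ℕ) (i j : Fin n) :
    (P ^ N) i j ≠ 0 ↔ GraphPow (fun a b => P a b ≠ 0) N i j := by
  induction N generalizing j with
  | zero =>
    rw [pow_zero]
    constructor
    · intro h
      have : i = j := by
        by_contra hij
        exact h (Matrix.one_apply_ne hij)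
      subst this; exact graphPow_zero i
    · rintro ⟨c, hc0, hcN, _⟩
      rw [← hc0, ← hcN]
      simp [Matrix.one_apply]
  | succ N ih =>
    rw [pow_succ, Matrix.mul_apply]
    constructor
    · intro h
      obtain ⟨v, _, hv⟩ := Finset.exists_ne_zero_of_sum_ne_zero h
      have h1 : (P ^ N) i v ≠ 0 := fun h' => hv (by rw [h', zero_mul])
      have h2 : P v j ≠ 0 := fun h' => hv (by rw [h', mul_zero])
      exact graphPow_trans ((ih v).mp h1) (graphPow_single h2)
    · rintro ⟨c, hc0, hcN, hcarc⟩
      have h1 : GraphPow (fun a b => P a b ≠ 0) N i (c N) :=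
        ⟨c, hc0, rfl, fun t ht => hcarc t (by omega)⟩
      have h2 : P (c N) j ≠ 0 := by
        have := hcarc N (by omega); rwa [hcN] at this
      have hpos1 : 0 < (P ^ N) i (c N) :=
        lt_of_le_of_ne ((isStochMat_pow hP N hn (i := i)).1 (c N)) (Ne.symm ((ih (c N)).mpr h1))
      have hpos2 : 0 < P (c N) j :=
        lt_of_le_of_ne ((hP (c N)).1 j) (Ne.symm h2)
      have hterm : 0 < (P ^ N) i (c N) * P (c N) j := mul_pos hpos1 hpos2
      have hsum : 0 < ∑ v, (P ^ N) i v * P v j := by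
        apply Finset.sum_pos' (fun v _ => mul_nonneg ((isStochMat_pow hP N hn (i := i)).1 v) ((hP v).1 j))
        exact ⟨c N, Finset.mem_univ _, hterm⟩
      exact ne_of_gt hsum

lemma mulVec_le_max {Q : Matrix (Fin n) (Fin n) ℝ} (hQ : IsStochMat Q) (z : Fin n → ℝ)
    (M : ℝ) (hM : ∀ j, z j ≤ M) (i : Fin n) : Q.mulVec z i ≤ M := by
  rw [Matrix.mulVec, dotProduct]
  calc ∑ j, Q i j * z j ≤ ∑ j, Q i j * M :=
        Finset.sum_le_sum fun j _ => mul_le_mul_of_nonneg_left (hM j) ((hQ i).1 j)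
    _ = M := by rw [← Finset.sum_mul, (hQ i).2, one_mul]

lemma min_le_mulVec {Q : Matrix (Fin n) (Fin n) ℝ} (hQ : IsStochMat Q) (z : Fin n → ℝ)
    (M : ℝ) (hM : ∀ j, M ≤ z j) (i : Fin n) : M ≤ Q.mulVec z i := by
  rw [Matrix.mulVec, dotProduct]
  calc M = ∑ j, Q i j * M := by rw [← Finset.sum_mul, (hQ i).2, one_mul]
    _ ≤ ∑ j, Q i j * z j :=
        Finset.sum_le_sum fun j _ => mul_le_mul_of_nonneg_left (hM j) ((hQ i).1 j)

lemma max_propagation {Q : Matrix (Fin n) (Fin n) ℝ} (hQ : IsStochMat Q) (z : Fin n → ℝ)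
    (M : ℝ) (hM : ∀ j, z j ≤ M) (i : Fin n) (hi : Q.mulVec z i = M) :
    ∀ j, Q i j ≠ 0 → z j = M := by
  intro j hj
  by_contra hne
  have hlt : z j < M := lt_of_le_of_ne (hM j) hne
  have hQpos : 0 < Q i j := lt_of_le_of_ne ((hQ i).1 j) (Ne.symm hj)
  have : Q.mulVec z i < M := by
    rw [Matrix.mulVec, dotProduct]
    calc ∑ v, Q i v * z v < ∑ v, Q i v * M := by
          apply Finset.sum_lt_sum
          · exact fun v _ => mul_le_mul_of_nonneg_left (hM v) ((hQ i).1 v)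
          · exact ⟨j, Finset.mem_univ j, by nlinarith⟩
      _ = M := by rw [← Finset.sum_mul, (hQ i).2, one_mul]
  linarith
end Stoch

section Classes
variable {n : ℕ} {P : Matrix (Fin n) (Fin n) ℝ} {F : Set (Fin n)}

lemma finalClass_closed (hF : IsFinalClass P F) {i j : Fin n} (hi : i ∈ F)
    (hij : MatAccess P i j) : j ∈ F := hF.2 i hi j hij

lemma class_mutual_access (hF : IsClass P F) {a b : Fin n} (ha : a ∈ F) (hb : b ∈ F) :
    MatAccess P a b := by
  obtain ⟨i0, rfl⟩ := hF
  exact Relation.ReflTransGen.trans ha.2 hb.1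

lemma finalClass_eq_class_of_mem (hF : IsFinalClass P F) {i : Fin n} (hi : i ∈ F) :
    F = {j | MatAccess P i j ∧ MatAccess P j i} := by
  obtain ⟨⟨i0, rfl⟩, _⟩ := hF
  ext j
  simp only [Set.mem_setOf_eq]
  constructor
  · rintro ⟨h1, h2⟩
    exact ⟨Relation.ReflTransGen.trans hi.2 h1, Relation.ReflTransGen.trans h2 hi.1⟩
  · rintro ⟨h1, h2⟩
    exact ⟨Relation.ReflTransGen.trans hi.1 h1, Relation.ReflTransGen.trans h2 hi.2⟩

/-- every node has access to a node in some final class -/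
lemma exists_final_access (P : Matrix (Fin n) (Fin n) ℝ) (i0 : Fin n) :
    ∃ F j, IsFinalClass P F ∧ j ∈ F ∧ MatAccess P i0 j := by
  classical
  let R : Finset (Fin n) := Finset.univ.filter (fun v => MatAccess P i0 v)
  have hR : R.Nonempty :=
    ⟨i0, Finset.mem_filter.mpr ⟨Finset.mem_univ _, Relation.ReflTransGen.refl⟩⟩
  let φ : Fin n → ℕ := fun v => (Finset.univ.filter (fun w => MatAccess P v w)).card
  obtain ⟨j, hjR, hjmin⟩ := Finset.exists_min_image R φ hR
  have hj0 : MatAccess P i0 j := by simpa [R] using hjR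
  have hback : ∀ v, MatAccess P j v → MatAccess P v j := by
    intro v hv
    have hvR : v ∈ R := by
      simp only [R, Finset.mem_filter, Finset.mem_univ, true_and]
      exact Relation.ReflTransGen.trans hj0 hv
    have hsub : (Finset.univ.filter (fun w => MatAccess P v w)) ⊆
        (Finset.univ.filter (fun w => MatAccess P j w)) := by
      intro w hw
      simp only [Finset.mem_filter, Finset.mem_univ, true_and] at hw ⊢
      exact Relation.ReflTransGen.trans hv hw
    have hle := hjmin v hvR
    have heq : (Finset.univ.filter (fun w => MatAccess P v w)) =
        (Finset.univ.filter (fun w => MatAccess P j w)) :=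
      Finset.eq_of_subset_of_card_le hsub hle
    have hjmem : j ∈ (Finset.univ.filter (fun w => MatAccess P v w)) := by
      rw [heq]
      exact Finset.mem_filter.mpr ⟨Finset.mem_univ _, Relation.ReflTransGen.refl⟩
    exact (Finset.mem_filter.mp hjmem).2
  refine ⟨{v | MatAccess P j v ∧ MatAccess P v j}, j, ⟨⟨j, rfl⟩, ?_⟩,
    ⟨Relation.ReflTransGen.refl, Relation.ReflTransGen.refl⟩, hj0⟩
  rintro u ⟨hu1, hu2⟩ w huw
  exact ⟨Relation.ReflTransGen.trans hu1 huw, hback w (Relation.ReflTransGen.trans hu1 huw)⟩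

lemma gaccess_finalGraph_of_matAccess (hF : IsFinalClass P F) {i j : Fin n}
    (hi : i ∈ F) (hij : MatAccess P i j) : GAccess (finalGraph P) i j := by
  induction hij with
  | refl => exact Relation.ReflTransGen.refl
  | @tail b c hib hbc ih =>
    have hb : b ∈ F := finalClass_closed hF hi hib
    have hc : c ∈ F := finalClass_closed hF hb (Relation.ReflTransGen.single hbc)
    exact Relation.ReflTransGen.tail ih ⟨F, hF, hb, hc, hbc⟩

lemma finalClass_step (hP : IsStochMat P) (hF : IsFinalClass P F) {i : Fin n} (hi : i ∈ F) :
    ∃ j, j ∈ F ∧ P i j ≠ 0 := by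
  by_contra h
  push_neg at h
  have hall : ∀ j, P i j = 0 := by
    intro j
    by_cases hjF : j ∈ F
    · exact h j hjF
    · by_contra hij
      exact hjF (finalClass_closed hF hi (Relation.ReflTransGen.single hij))
  have := (hP i).2
  rw [Finset.sum_eq_zero (fun j _ => hall j)] at this
  norm_num at this

lemma isGraphClass_finalGraph (hP : IsStochMat P) (hF : IsFinalClass P F)
    (hne : F.Nonempty) : IsGraphClass (finalGraph P) F := by
  obtain ⟨i, hi⟩ := hne
  constructor
  · refine ⟨i, ?_⟩
    rw [finalClass_eq_class_of_mem hF hi]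
    ext j
    simp only [Set.mem_setOf_eq]
    constructor
    · rintro ⟨h1, h2⟩
      have hjF : j ∈ F := finalClass_closed hF hi h1
      exact ⟨gaccess_finalGraph_of_matAccess hF hi h1,
        gaccess_finalGraph_of_matAccess hF hjF h2⟩
    · rintro ⟨h1, h2⟩
      constructor
      · exact Relation.ReflTransGen.mono (fun a b (hab : finalGraph P a b) => by obtain ⟨_, _, _, _, h⟩ := hab; exact h) _ _ h1
      · exact Relation.ReflTransGen.mono (fun a b (hab : finalGraph P a b) => by obtain ⟨_, _, _, _, h⟩ := hab; exact h) _ _ h2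
  · obtain ⟨j, hjF, hij⟩ := finalClass_step hP hF hi
    exact ⟨i, hi, j, hjF, F, hF, hi, hjF, hij⟩

end Classes

end Aux16

section Main16
set_option maxHeartbeats 2000000

variable {n : ℕ} {P : Matrix (Fin n) (Fin n) ℝ}

lemma graphPow_split {G : Fin n → Fin n → Prop} {a b : ℕ} {i j : Fin n}
    (h : GraphPow G (a + b) i j) : ∃ v, GraphPow G a i v ∧ GraphPow G b v j := by
  obtain ⟨cc, h0, hab, harc⟩ := h
  refine ⟨cc a, ⟨cc, h0, rfl, fun t ht => harc t (by omega)⟩,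
    ⟨fun t => cc (a + t), rfl, hab, fun t ht => ?_⟩⟩
  show G (cc (a + t)) (cc (a + (t + 1)))
  have he : a + (t + 1) = (a + t) + 1 := by omega
  rw [he]
  exact harc (a + t) (by omega)

lemma mulVec_eq_of_support {Q : Matrix (Fin n) (Fin n) ℝ} (hQ : IsStochMat Q)
    (z : Fin n → ℝ) (M : ℝ) (i : Fin n) (h : ∀ j, Q i j ≠ 0 → z j = M) :
    Q.mulVec z i = M := by
  rw [Matrix.mulVec, dotProduct]
  have hterm : ∀ j, Q i j * z j = Q i j * M := by
    intro j
    by_cases h0 : Q i j = 0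
    · rw [h0, zero_mul, zero_mul]
    · rw [h j h0]
  rw [Finset.sum_congr rfl (fun j _ => hterm j), ← Finset.sum_mul, (hQ i).2, one_mul]

lemma extend_in_final (hP : IsStochMat P) {F : Set (Fin n)} (hF : IsFinalClass P F) :
    ∀ d : ℕ, ∀ v ∈ F, ∃ w ∈ F, GraphPow (fun a b => P a b ≠ 0) d v w := by
  intro d
  induction d with
  | zero => exact fun v hv => ⟨v, hv, graphPow_zero v⟩
  | succ d ih =>
    intro v hv
    obtain ⟨w, hw, hpath⟩ := ih v hv
    obtain ⟨w', hw', harc⟩ := finalClass_step hP hF hw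
    exact ⟨w', hw', graphPow_trans hpath (graphPow_single harc)⟩

lemma key_lemma (hn : 1 ≤ n) (hP : IsStochMat P) (y : Fin n → ℝ) (k : ℕ) (hk : 1 ≤ k)
    (hy : (P ^ k).mulVec y = y) :
    ∀ i, y i ≤ (P ^ GraphCyclicity (finalGraph P)).mulVec y i := by
  classical
  set c := GraphCyclicity (finalGraph P) with hc
  set z : Fin n → ℝ := y - (P ^ c).mulVec y with hz
  have hym : ∀ m : ℕ, (P ^ (k * m)).mulVec y = y := by
    intro m
    induction m with
    | zero => simp [Matrix.one_mulVec]
    | succ m ih =>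
      have he : k * (m + 1) = k * m + k := by ring
      rw [he, pow_add, ← Matrix.mulVec_mulVec, hy, ih]
  have hzm : ∀ m : ℕ, (P ^ (k * m)).mulVec z = z := by
    intro m
    rw [hz, Matrix.mulVec_sub, hym m, Matrix.mulVec_mulVec, ← pow_add]
    have he : k * m + c = c + k * m := by ring
    rw [he, pow_add, ← Matrix.mulVec_mulVec, hym m]
  have hneU : (Finset.univ : Finset (Fin n)).Nonempty := ⟨⟨0, hn⟩, Finset.mem_univ _⟩
  obtain ⟨i0, -, hi0max⟩ := Finset.exists_max_image Finset.univ z hneU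
  set M := z i0 with hM
  have hmax : ∀ j, z j ≤ M := fun j => hi0max j (Finset.mem_univ j)
  suffices hM0 : M ≤ 0 by
    intro i
    have h1 : z i ≤ 0 := le_trans (hmax i) hM0
    have h2 : z i = y i - (P ^ c).mulVec y i := by simp [hz]
    linarith [h2 ▸ h1]
  -- reach a final class
  obtain ⟨F, f, hF, hfF, hacc⟩ := exists_final_access P i0
  obtain ⟨ℓ0, hpath0⟩ := reflTransGen_to_graphPow hacc
  set m1 := ℓ0 + 1 with hm1def
  have hm1le : m1 ≤ k * m1 := Nat.le_mul_of_pos_left m1 hk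
  have hlen : ℓ0 + (k * m1 - ℓ0) = k * m1 := by omega
  obtain ⟨js, hjsF, hpath1'⟩ := extend_in_final hP hF (k * m1 - ℓ0) f hfF
  have hpath1 : GraphPow (fun a b => P a b ≠ 0) (k * m1) i0 js := by
    have hx := graphPow_trans hpath0 hpath1'
    rwa [hlen] at hx
  have hstoch : ∀ N, IsStochMat (P ^ N) := fun N => isStochMat_pow hP N hn
  have hzjs : z js = M :=
    max_propagation (hstoch (k * m1)) z M hmax i0 (by rw [hzm m1]) js
      ((pow_entry_ne_zero_iff hP hn (k * m1) i0 js).mpr hpath1)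
  -- return times at js
  set A : Set ℕ := {ℓ | 0 < ℓ ∧ GraphPow (fun a b => P a b ≠ 0) ℓ js js} with hA
  have hAadd : ∀ a ∈ A, ∀ b ∈ A, a + b ∈ A := by
    rintro a ⟨hapos, hapath⟩ b ⟨hbpos, hbpath⟩
    exact ⟨by omega, graphPow_trans hapath hbpath⟩
  have hApos : ∀ a ∈ A, 0 < a := fun a ha => ha.1
  have hAne : A.Nonempty := by
    obtain ⟨j1, hj1F, harc⟩ := finalClass_step hP hF hjsF
    have hacc1 : MatAccess P j1 js := class_mutual_access hF.1 hj1F hjsF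
    obtain ⟨ℓ1, hpathb⟩ := reflTransGen_to_graphPow hacc1
    exact ⟨1 + ℓ1, by omega, graphPow_trans (graphPow_single harc) hpathb⟩
  obtain ⟨m0, hm0pos, hpump⟩ := pump_lemma A hAne hAadd hApos
  set g' := SetGcd A with hg'
  have hg'dvdA : ∀ a ∈ A, g' ∣ a := (setGcd_spec A).1
  have hg'pos : 0 < g' := by
    obtain ⟨a0, ha0⟩ := hAne
    have h1 := hg'dvdA a0 ha0
    have h2 := hApos a0 ha0
    rcases Nat.eq_zero_or_pos g' with h | h
    · exfalso
      rw [h] at h1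
      have := Nat.eq_zero_of_zero_dvd h1
      omega
    · exact h
  -- g' divides c
  have hg'c : g' ∣ c := by
    have hdvdL : ∀ ℓ ∈ {ℓ | HasCircuitIn (finalGraph P) F ℓ}, g' ∣ ℓ := by
      rintro ℓ ⟨hℓpos, cc, hccloop, hccF, hccarc⟩
      have hvF : cc 0 ∈ F := hccF 0 (Nat.zero_le ℓ)
      have hcirc : GraphPow (fun a b => P a b ≠ 0) ℓ (cc 0) (cc 0) := by
        refine ⟨cc, rfl, hccloop.symm, fun t ht => ?_⟩
        obtain ⟨C, hC, h1, h2, h3⟩ := hccarc t ht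
        exact h3
      obtain ⟨a, hpa⟩ := reflTransGen_to_graphPow (class_mutual_access hF.1 hjsF hvF)
      obtain ⟨b, hpb⟩ := reflTransGen_to_graphPow (class_mutual_access hF.1 hvF hjsF)
      rcases Nat.eq_zero_or_pos (a + b) with hab | hab
      · -- a = b = 0, so js = cc 0
        have ha0 : a = 0 := by omega
        have hb0 : b = 0 := by omega
        subst ha0
        obtain ⟨dd, hd0, hdN, -⟩ := hpa
        have hjv : js = cc 0 := by rw [← hd0, hdN]
        have hmemA : ℓ ∈ A := ⟨hℓpos, by rw [hjv]; exact hcirc⟩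
        exact hg'dvdA ℓ hmemA
      · have hmem1 : a + b ∈ A := ⟨hab, graphPow_trans hpa hpb⟩
        have hmem2 : a + (ℓ + b) ∈ A :=
          ⟨by omega, graphPow_trans hpa (graphPow_trans hcirc hpb)⟩
        have hd1 := hg'dvdA _ hmem1
        have hd2 := hg'dvdA _ hmem2
        have hsub := Nat.dvd_sub hd2 hd1
        have he : a + (ℓ + b) - (a + b) = ℓ := by omega
        rwa [he] at hsub
    have h1 : g' ∣ SetGcd {ℓ | HasCircuitIn (finalGraph P) F ℓ} :=
      (setGcd_spec _).2.1 g' hdvdL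
    have hclass : IsGraphClass (finalGraph P) F := isGraphClass_finalGraph hP hF ⟨f, hfF⟩
    have hSfin : {d | ∃ C, IsGraphClass (finalGraph P) C ∧
        d = SetGcd {ℓ | HasCircuitIn (finalGraph P) C ℓ}}.Finite := by
      apply Set.Finite.subset (Set.finite_range
        (fun C : Set (Fin n) => SetGcd {ℓ | HasCircuitIn (finalGraph P) C ℓ}))
      rintro d ⟨C, -, rfl⟩
      exact ⟨C, rfl⟩
    have h2 : SetGcd {ℓ | HasCircuitIn (finalGraph P) F ℓ} ∣ c := by
      rw [hc]
      unfold GraphCyclicity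
      exact setLcm_dvd_mem _ hSfin _ ⟨F, hclass, rfl⟩
    exact h1.trans h2
  -- the saturated set
  set SS : Set (Fin n) := {j | ∃ m, 1 ≤ m ∧ GraphPow (fun a b => P a b ≠ 0) (k * m) js j}
    with hSS
  have hjsS : js ∈ SS := by
    have hkm0 : m0 ≤ k * m0 := Nat.le_mul_of_pos_left m0 hk
    have hmem := hpump (k * m0) hkm0
    refine ⟨m0 * g', ?_, ?_⟩
    · have := Nat.mul_pos hm0pos hg'pos; omega
    · rw [show k * (m0 * g') = (k * m0) * g' from by ring]
      exact hmem.2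
  have hstep : ∀ j ∈ SS, ∀ j', GraphPow (fun a b => P a b ≠ 0) c j j' → j' ∈ SS := by
    rintro j ⟨m, hm1, hpm⟩ j' hpc
    rcases Nat.eq_zero_or_pos c with hc0 | hcpos
    · rw [hc0] at hpc
      obtain ⟨dd, hd0, hdN, -⟩ := hpc
      have hjj : j = j' := by rw [← hd0, hdN]
      exact ⟨m, hm1, hjj ▸ hpm⟩
    · obtain ⟨c1, hc1⟩ := hg'c
      have hc1pos : 0 < c1 := by
        rcases Nat.eq_zero_or_pos c1 with h | h
        · exfalso; rw [h, Nat.mul_zero] at hc1; omega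
        · exact h
      have hkm01 : 0 < k * (m0 + 1) := Nat.mul_pos hk (by omega)
      obtain ⟨t, ht⟩ : ∃ t, k * (m0 + 1) = 1 + t := ⟨k * (m0 + 1) - 1, by omega⟩
      have hm01le : m0 + 1 ≤ k * (m0 + 1) := Nat.le_mul_of_pos_left (m0 + 1) hk
      have hts : m0 ≤ t := by omega
      have hsge : m0 ≤ c1 * t := le_trans hts (Nat.le_mul_of_pos_left t hc1pos)
      have hpumped := hpump (c1 * t) hsge
      have hkey : k * (m + c * (m0 + 1)) = k * m + c + (c1 * t) * g' := by
        calc k * (m + c * (m0 + 1)) = k * m + c * (k * (m0 + 1)) := by ring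
          _ = k * m + c * (1 + t) := by rw [ht]
          _ = k * m + c + c * t := by ring
          _ = k * m + c + (g' * c1) * t := by rw [← hc1]
          _ = k * m + c + (c1 * t) * g' := by ring
      refine ⟨m + c * (m0 + 1), by omega, ?_⟩
      have hbig := graphPow_trans hpumped.2 (graphPow_trans hpm hpc)
      have he : (c1 * t) * g' + (k * m + c) = k * (m + c * (m0 + 1)) := by rw [hkey]; ring
      rwa [he] at hbig
  have hmulti : ∀ ℓ : ℕ, ∀ j ∈ SS, ∀ j',
      GraphPow (fun a b => P a b ≠ 0) (ℓ * c) j j' → j' ∈ SS := by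
    intro ℓ
    induction ℓ with
    | zero =>
      intro j hj j' hp
      rw [Nat.zero_mul] at hp
      obtain ⟨dd, hd0, hdN, -⟩ := hp
      have hjj : j = j' := by rw [← hd0, hdN]
      exact hjj ▸ hj
    | succ ℓ ih =>
      intro j hj j' hp
      rw [show (ℓ + 1) * c = ℓ * c + c from by ring] at hp
      obtain ⟨v, h1, h2⟩ := graphPow_split hp
      exact hstep v (ih j hj v h1) j' h2
  have hzSS : ∀ j ∈ SS, z j = M := by
    rintro j ⟨m, hm1, hp⟩
    exact max_propagation (hstoch (k * m)) z M hmax js (by rw [hzm m, hzjs]) j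
      ((pow_entry_ne_zero_iff hP hn (k * m) js j).mpr hp)
  have hiter : ∀ ℓ : ℕ, (P ^ (ℓ * c)).mulVec z js = M := by
    intro ℓ
    apply mulVec_eq_of_support (hstoch (ℓ * c)) z M js
    intro j' hj'
    exact hzSS j' (hmulti ℓ js hjsS j' ((pow_entry_ne_zero_iff hP hn (ℓ * c) js j').mp hj'))
  have htel : ∀ ℓ : ℕ, y js - (P ^ (ℓ * c)).mulVec y js = ℓ * M := by
    intro ℓ
    induction ℓ with
    | zero => simp [Matrix.one_mulVec]
    | succ ℓ ih =>
      have hsplit : (P ^ ((ℓ + 1) * c)).mulVec y = (P ^ (ℓ * c)).mulVec ((P ^ c).mulVec y) := by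
        rw [Matrix.mulVec_mulVec, ← pow_add]
        congr 1
        ring
      have hz'fun : (P ^ (ℓ * c)).mulVec z =
          (P ^ (ℓ * c)).mulVec y - (P ^ ((ℓ + 1) * c)).mulVec y := by
        rw [hz, Matrix.mulVec_sub, hsplit]
      have hz'' : M = (P ^ (ℓ * c)).mulVec y js - (P ^ ((ℓ + 1) * c)).mulVec y js := by
        rw [← hiter ℓ, hz'fun]
        simp
      push_cast
      push_cast at ih
      linarith
  obtain ⟨i1, -, hi1min⟩ := Finset.exists_min_image Finset.univ y hneU
  have hlow : ∀ N, y i1 ≤ (P ^ N).mulVec y js := fun N =>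
    min_le_mulVec (hstoch N) y (y i1) (fun j => hi1min j (Finset.mem_univ j)) js
  by_contra hMpos
  push_neg at hMpos
  obtain ⟨ℓ, hℓ⟩ := exists_nat_gt ((y js - y i1) / M)
  have h1 := htel ℓ
  have h2 := hlow (ℓ * c)
  rw [div_lt_iff₀ hMpos] at hℓ
  linarith

end Main16

/-- the length of any periodic orbit of a stochastic matrix `P` divides
the cyclicity of its final graph. -/
theorem stmt16 (n : ℕ) (hn : 1 ≤ n) (P : Matrix (Fin n) (Fin n) ℝ)
    (hP : IsStochMat P) (x : Fin n → ℝ) (k : ℕ) (hk : 1 ≤ k)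
    (hx : (P ^ k).mulVec x = x) :
    (P ^ GraphCyclicity (finalGraph P)).mulVec x = x := by
  have h1 := key_lemma hn hP x k hk hx
  have h2 := key_lemma hn hP (-x) k hk (by rw [Matrix.mulVec_neg, hx])
  funext i
  have ha := h1 i
  have hb := h2 i
  rw [Matrix.mulVec_neg] at hb
  simp only [Pi.neg_apply] at hb
  linarith
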